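/- arXiv:1911.12159 — 4 statements merged into one kernel-verified Lean document; each statement's English description precedes it below -/
import Mathlib

section
/- Let ψ₁ ∈ L²(ℝ) be such that ψ̂₁ is bounded and supported in [−5/4, −1/4] ∪ [1/4, 5/4], and let ψ₂ ∈ L²(ℝ) be such that ψ̂₂ is bounded and supported in [−1, 1]. Define ψ ∈ L²(ℝ²) on the Fourier side by ψ̂(ξ₁, ξ₂) = ψ̂₁(ξ₁) ψ̂₂(ξ₂/ξ₁) for ξ₁ ≠ 0. Then ψ is admissible; more precisely, ∫_{ℝ²} |ψ̂(ξ)|² / ξ₁² dξ = (∫_ℝ |ψ̂₁(r)|² / |r| dr) · (∫_ℝ |ψ̂₂(u)|² du) < ∞. -/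
open MeasureTheory
open scoped ENNReal

lemma lintegral_comp_div_aux (g : ℝ → ℝ≥0∞) (hg : Measurable g) {c : ℝ} (hc : c ≠ 0) :
    (∫⁻ x : ℝ, g (x / c)) = ENNReal.ofReal |c| * ∫⁻ u : ℝ, g u := by
  have h1 : (fun x : ℝ => g (x / c)) = fun x => g (c⁻¹ * x) := by
    funext x; rw [div_eq_inv_mul]
  rw [h1]
  have h2 := MeasureTheory.lintegral_map (μ := (volume : Measure ℝ)) hg
    (measurable_const_mul (c⁻¹ : ℝ))
  rw [← h2, Real.map_volume_mul_left (inv_ne_zero hc), inv_inv,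
    lintegral_smul_measure, smul_eq_mul]

/-- **Admissibility of classical shearlets.**  Let `ψ₁hat = ψ̂₁` be bounded (and measurable,
as is automatic for the Fourier transform of an `L²` function) with support contained in
`[-5/4, -1/4] ∪ [1/4, 5/4]`, and let `ψ₂hat = ψ̂₂` be bounded and measurable with support
contained in `[-1, 1]`.  Define `ψ ∈ L²(ℝ²)` on the Fourier side by
`ψ̂(ξ₁, ξ₂) = ψ̂₁(ξ₁) ψ̂₂(ξ₂/ξ₁)`.  Then `ψ` is admissible; more precisely
`∫_{ℝ²} |ψ̂(ξ)|²/ξ₁² dξ = (∫_ℝ |ψ̂₁(r)|²/|r| dr) ⬝ (∫_ℝ |ψ̂₂(u)|² du) < ∞`. -/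
theorem classical_shearlet_admissible
    (ψ₁hat ψ₂hat : ℝ → ℂ)
    (hm₁ : Measurable ψ₁hat) (hm₂ : Measurable ψ₂hat)
    (M₁ : ℝ) (hb₁ : ∀ r : ℝ, ‖ψ₁hat r‖ ≤ M₁)
    (M₂ : ℝ) (hb₂ : ∀ u : ℝ, ‖ψ₂hat u‖ ≤ M₂)
    (hs₁ : Function.support ψ₁hat ⊆
      Set.Icc (-(5 : ℝ) / 4) (-(1 : ℝ) / 4) ∪ Set.Icc ((1 : ℝ) / 4) ((5 : ℝ) / 4))
    (hs₂ : Function.support ψ₂hat ⊆ Set.Icc (-1 : ℝ) 1) :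
    (∫⁻ ξ : ℝ × ℝ, ENNReal.ofReal (‖ψ₁hat ξ.1 * ψ₂hat (ξ.2 / ξ.1)‖ ^ 2 / ξ.1 ^ 2))
      = (∫⁻ r : ℝ, ENNReal.ofReal (‖ψ₁hat r‖ ^ 2 / |r|)) *
          (∫⁻ u : ℝ, ENNReal.ofReal (‖ψ₂hat u‖ ^ 2)) ∧
    (∫⁻ ξ : ℝ × ℝ, ENNReal.ofReal (‖ψ₁hat ξ.1 * ψ₂hat (ξ.2 / ξ.1)‖ ^ 2 / ξ.1 ^ 2)) < ∞ := by
  set C₂ : ℝ≥0∞ := ∫⁻ u : ℝ, ENNReal.ofReal (‖ψ₂hat u‖ ^ 2) with hC₂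
  -- measurability of the product integrand
  have hmprod : Measurable (fun ξ : ℝ × ℝ =>
      ENNReal.ofReal (‖ψ₁hat ξ.1 * ψ₂hat (ξ.2 / ξ.1)‖ ^ 2 / ξ.1 ^ 2)) := by
    apply Measurable.ennreal_ofReal
    apply Measurable.div
    · exact ((hm₁.comp measurable_fst).mul
        (hm₂.comp (measurable_snd.div measurable_fst))).norm.pow measurable_const
    · exact (measurable_fst.pow measurable_const)
  have hm₂' : Measurable fun u : ℝ => ENNReal.ofReal (‖ψ₂hat u‖ ^ 2) :=
    (hm₂.norm.pow measurable_const).ennreal_ofReal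
  -- Fubini
  have hfub : (∫⁻ ξ : ℝ × ℝ, ENNReal.ofReal (‖ψ₁hat ξ.1 * ψ₂hat (ξ.2 / ξ.1)‖ ^ 2 / ξ.1 ^ 2))
      = ∫⁻ r : ℝ, ∫⁻ s : ℝ, ENNReal.ofReal (‖ψ₁hat r * ψ₂hat (s / r)‖ ^ 2 / r ^ 2) := by
    rw [Measure.volume_eq_prod]
    exact lintegral_prod _ hmprod.aemeasurable
  -- inner integral computation
  have hinner : ∀ r : ℝ,
      (∫⁻ s : ℝ, ENNReal.ofReal (‖ψ₁hat r * ψ₂hat (s / r)‖ ^ 2 / r ^ 2))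
        = ENNReal.ofReal (‖ψ₁hat r‖ ^ 2 / |r|) * C₂ := by
    intro r
    rcases eq_or_ne r 0 with hr | hr
    · subst hr
      have h0 : ψ₁hat 0 = 0 := by
        by_contra h
        have := hs₁ h
        rcases this with h | h <;> simp only [Set.mem_Icc] at h <;> linarith [h.1, h.2]
      simp [h0]
    · have key : ∀ s : ℝ, ENNReal.ofReal (‖ψ₁hat r * ψ₂hat (s / r)‖ ^ 2 / r ^ 2)
          = ENNReal.ofReal (‖ψ₁hat r‖ ^ 2 / r ^ 2) * ENNReal.ofReal (‖ψ₂hat (s / r)‖ ^ 2) := by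
        intro s
        rw [← ENNReal.ofReal_mul (by positivity)]
        congr 1
        rw [norm_mul, mul_pow]
        ring
      simp only [key]
      rw [lintegral_const_mul _ (show Measurable fun s : ℝ => ENNReal.ofReal (‖ψ₂hat (s / r)‖ ^ 2) from hm₂'.comp (measurable_id.div_const r)),
        lintegral_comp_div_aux _ hm₂' hr, ← mul_assoc]
      congr 1
      rw [← ENNReal.ofReal_mul (by positivity)]
      congr 1
      rw [← sq_abs r]
      have habs : |r| ≠ 0 := abs_ne_zero.mpr hr
      field_simp
  have heq : (∫⁻ ξ : ℝ × ℝ, ENNReal.ofReal (‖ψ₁hat ξ.1 * ψ₂hat (ξ.2 / ξ.1)‖ ^ 2 / ξ.1 ^ 2))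
      = (∫⁻ r : ℝ, ENNReal.ofReal (‖ψ₁hat r‖ ^ 2 / |r|)) * C₂ := by
    rw [hfub]
    simp only [hinner]
    rw [lintegral_mul_const _ (show Measurable fun r : ℝ => ENNReal.ofReal (‖ψ₁hat r‖ ^ 2 / |r|) from
      ((hm₁.norm.pow measurable_const).div measurable_id.abs).ennreal_ofReal)]
  refine ⟨heq, ?_⟩
  rw [heq]
  -- finiteness
  have hM₁ : 0 ≤ M₁ := (norm_nonneg _).trans (hb₁ 0)
  have hM₂ : 0 ≤ M₂ := (norm_nonneg _).trans (hb₂ 0)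
  set S : Set ℝ := Set.Icc (-(5 : ℝ) / 4) (-(1 : ℝ) / 4) ∪ Set.Icc ((1 : ℝ) / 4) ((5 : ℝ) / 4)
  have hSm : MeasurableSet S := (measurableSet_Icc).union measurableSet_Icc
  have h1 : (∫⁻ r : ℝ, ENNReal.ofReal (‖ψ₁hat r‖ ^ 2 / |r|))
      ≤ ∫⁻ r : ℝ, S.indicator (fun _ => ENNReal.ofReal (4 * M₁ ^ 2)) r := by
    apply lintegral_mono
    intro r
    by_cases hr : r ∈ Function.support ψ₁hat
    · have hrS : r ∈ S := hs₁ hr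
      rw [Set.indicator_of_mem hrS]
      apply ENNReal.ofReal_le_ofReal
      have habs : (1 : ℝ) / 4 ≤ |r| := by
        rcases hs₁ hr with h | h <;> simp only [Set.mem_Icc] at h
        · rw [abs_of_neg (by linarith [h.2])]; linarith [h.2]
        · rw [abs_of_pos (by linarith [h.1])]; linarith [h.1]
      have hpos : (0 : ℝ) < |r| := by linarith
      rw [div_le_iff₀ hpos]
      calc ‖ψ₁hat r‖ ^ 2 ≤ M₁ ^ 2 := by
            have := hb₁ r; nlinarith [norm_nonneg (ψ₁hat r)]
        _ ≤ 4 * M₁ ^ 2 * |r| := by nlinarith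
    · rw [Function.mem_support, not_not] at hr
      simp [hr]
  have h2 : C₂ ≤ ∫⁻ u : ℝ, (Set.Icc (-1 : ℝ) 1).indicator
      (fun _ => ENNReal.ofReal (M₂ ^ 2)) u := by
    apply lintegral_mono
    intro u
    by_cases hu : u ∈ Function.support ψ₂hat
    · rw [Set.indicator_of_mem (hs₂ hu)]
      apply ENNReal.ofReal_le_ofReal
      have := hb₂ u; nlinarith [norm_nonneg (ψ₂hat u)]
    · rw [Function.mem_support, not_not] at hu
      simp [hu]
  rw [lintegral_indicator hSm] at h1
  rw [lintegral_indicator measurableSet_Icc] at h2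
  simp only [lintegral_const, Measure.restrict_apply_univ] at h1 h2
  have hvS : volume S < ∞ := by
    apply lt_of_le_of_lt (measure_union_le _ _)
    simp [Real.volume_Icc]
  have hfin1 : (∫⁻ r : ℝ, ENNReal.ofReal (‖ψ₁hat r‖ ^ 2 / |r|)) < ∞ :=
    lt_of_le_of_lt h1 (ENNReal.mul_lt_top ENNReal.ofReal_lt_top hvS)
  have hfin2 : C₂ < ∞ :=
    lt_of_le_of_lt h2 (ENNReal.mul_lt_top ENNReal.ofReal_lt_top (by simp [Real.volume_Icc]))
  exact ENNReal.mul_lt_top hfin1 hfin2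
end

section
/- Let f ∈ L¹(ℝ²). Then for every θ ∈ [0, π] and almost every p ∈ ℝ, the function s ↦ f(p ω(θ) + s ω(θ)^⊥) is integrable (so Rf(θ, p) is defined for a.e. p), the function (θ, p) ↦ Rf(θ, p) is measurable, and ∫_0^π ∫_ℝ |Rf(θ, p)| dp dθ ≤ π ‖f‖_{L¹(ℝ²)}. In particular, the Radon transform is a continuous linear map from L¹(ℝ²) to L¹([0,π] × ℝ). -/
open MeasureTheory
open scoped ENNReal

noncomputable def rotMap (θ : ℝ) : (ℝ × ℝ) →ₗ[ℝ] (ℝ × ℝ) where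
  toFun x := (x.1 * Real.cos θ - x.2 * Real.sin θ, x.1 * Real.sin θ + x.2 * Real.cos θ)
  map_add' x y := by simp [Prod.ext_iff]; constructor <;> ring
  map_smul' c x := by simp [Prod.ext_iff, smul_eq_mul]; constructor <;> ring

lemma rotMap_det (θ : ℝ) : LinearMap.det (rotMap θ) = 1 := by
  rw [← LinearMap.det_toMatrix (Module.Basis.finTwoProd ℝ), Matrix.det_fin_two]
  simp [LinearMap.toMatrix_apply, rotMap, Module.Basis.finTwoProd]
  ring_nf
  rw [add_comm]
  exact Real.sin_sq_add_cos_sq θ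

lemma rotMap_mp (θ : ℝ) : MeasurePreserving (rotMap θ) volume volume := by
  refine ⟨(rotMap θ).continuous_of_finiteDimensional.measurable, ?_⟩
  rw [Measure.map_linearMap_addHaar_eq_smul_addHaar volume (by rw [rotMap_det]; norm_num)]
  simp [rotMap_det]

/-- **The Radon transform is a continuous linear map `L¹(ℝ²) → L¹([0,π] × ℝ)`.**
For `f ∈ L¹(ℝ²)` and `Rf(θ,p) = ∫ f(p ω(θ) + s ω(θ)^⊥) ds` (with `ω(θ) = (cos θ, sin θ)`,
`ω(θ)^⊥ = (-sin θ, cos θ)`): for every `θ ∈ [0,π]` and almost every `p`, the integrand is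
integrable in `s`; `(θ,p) ↦ Rf(θ,p)` is (a.e. strongly) measurable; and
`∫₀^π ∫_ℝ |Rf(θ,p)| dp dθ ≤ π ‖f‖_{L¹}`. -/
theorem radon_transform_L1_continuous (f : ℝ × ℝ → ℂ) (hf : Integrable f volume) :
    (∀ θ ∈ Set.Icc (0 : ℝ) Real.pi, ∀ᵐ p : ℝ ∂volume,
      Integrable (fun s : ℝ =>
        f (p * Real.cos θ - s * Real.sin θ, p * Real.sin θ + s * Real.cos θ)) volume) ∧
    AEStronglyMeasurable (fun q : ℝ × ℝ =>
      ∫ s : ℝ, f (q.2 * Real.cos q.1 - s * Real.sin q.1,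
        q.2 * Real.sin q.1 + s * Real.cos q.1)) volume ∧
    (∫⁻ θ in Set.Icc (0 : ℝ) Real.pi, ∫⁻ p : ℝ,
        (‖∫ s : ℝ, f (p * Real.cos θ - s * Real.sin θ,
            p * Real.sin θ + s * Real.cos θ)‖₊ : ℝ≥0∞))
      ≤ ENNReal.ofReal Real.pi * ∫⁻ x : ℝ × ℝ, (‖f x‖₊ : ℝ≥0∞) := by
  -- the composed function, on the product measure
  have hg : ∀ θ : ℝ, Integrable (fun x : ℝ × ℝ => f (rotMap θ x)) (volume.prod volume) := by
    intro θ
    have h : Integrable (f ∘ (rotMap θ)) volume :=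
      (integrable_map_measure (by rw [(rotMap_mp θ).map_eq]; exact hf.aestronglyMeasurable)
        (rotMap_mp θ).measurable.aemeasurable).mp (by rw [(rotMap_mp θ).map_eq]; exact hf)
    rwa [Measure.volume_eq_prod] at h
  have heq : ∀ θ p s : ℝ, f (rotMap θ (p, s))
      = f (p * Real.cos θ - s * Real.sin θ, p * Real.sin θ + s * Real.cos θ) := fun _ _ _ => rfl
  refine ⟨?_, ?_, ?_⟩
  · intro θ _
    exact (hg θ).prod_right_ae
  · -- measurability
    set Φ : ℝ × (ℝ × ℝ) → ℝ × ℝ := fun z => rotMap z.1 z.2 with hΦ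
    have hΦm : Measurable Φ := by
      have : Continuous Φ := by
        simp only [hΦ, rotMap, LinearMap.coe_mk, AddHom.coe_mk]
        fun_prop
      exact this.measurable
    have hqmp : Measure.QuasiMeasurePreserving Φ volume volume := by
      refine ⟨hΦm, Measure.AbsolutelyContinuous.mk fun s hs hs0 => ?_⟩
      rw [Measure.map_apply hΦm hs, Measure.volume_eq_prod,
        Measure.measure_prod_null (hΦm hs)]
      filter_upwards with θ
      have h5 : (Prod.mk θ ⁻¹' (Φ ⁻¹' s)) = (rotMap θ) ⁻¹' s := rfl
      simp [h5, (rotMap_mp θ).measure_preimage hs.nullMeasurableSet, hs0]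
    have hF : AEStronglyMeasurable ((f ∘ Φ) ∘ (MeasurableEquiv.prodAssoc :
        ((ℝ × ℝ) × ℝ) ≃ᵐ ℝ × (ℝ × ℝ))) volume :=
      (hf.aestronglyMeasurable.comp_quasiMeasurePreserving hqmp).comp_quasiMeasurePreserving
        (volume_preserving_prodAssoc).quasiMeasurePreserving
    rw [Measure.volume_eq_prod] at hF
    exact hF.integral_prod_right'
  · -- the inequality
    have key : ∀ θ : ℝ, (∫⁻ p : ℝ, (‖∫ s : ℝ, f (p * Real.cos θ - s * Real.sin θ,
          p * Real.sin θ + s * Real.cos θ)‖₊ : ℝ≥0∞)) ≤ ∫⁻ x : ℝ × ℝ, (‖f x‖₊ : ℝ≥0∞) := by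
      intro θ
      have h1 : (∫⁻ p : ℝ, (‖∫ s : ℝ, f (p * Real.cos θ - s * Real.sin θ,
            p * Real.sin θ + s * Real.cos θ)‖₊ : ℝ≥0∞))
          ≤ ∫⁻ p : ℝ, ∫⁻ s : ℝ, (‖f (rotMap θ (p, s))‖₊ : ℝ≥0∞) := by
        refine lintegral_mono fun p => ?_
        simp only [heq]
        exact enorm_integral_le_lintegral_enorm _
      have h2 : (∫⁻ x : ℝ × ℝ, (‖f (rotMap θ x)‖₊ : ℝ≥0∞) ∂(volume.prod volume))
          = ∫⁻ p : ℝ, ∫⁻ s : ℝ, (‖f (rotMap θ (p, s))‖₊ : ℝ≥0∞) :=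
        lintegral_prod _ (hg θ).aestronglyMeasurable.enorm
      have h3 : (∫⁻ x : ℝ × ℝ, (‖f (rotMap θ x)‖₊ : ℝ≥0∞) ∂(volume.prod volume))
          = ∫⁻ x : ℝ × ℝ, (‖f x‖₊ : ℝ≥0∞) := by
        rw [← Measure.volume_eq_prod]
        conv_rhs => rw [← (rotMap_mp θ).map_eq]
        exact (lintegral_map'
          (by rw [(rotMap_mp θ).map_eq]; exact hf.aestronglyMeasurable.enorm)
          (rotMap_mp θ).measurable.aemeasurable).symm
      calc _ ≤ _ := h1
        _ = _ := h2.symm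
        _ = _ := h3
    calc (∫⁻ θ in Set.Icc (0 : ℝ) Real.pi, ∫⁻ p : ℝ,
          (‖∫ s : ℝ, f (p * Real.cos θ - s * Real.sin θ,
            p * Real.sin θ + s * Real.cos θ)‖₊ : ℝ≥0∞))
        ≤ ∫⁻ _ in Set.Icc (0 : ℝ) Real.pi, ∫⁻ x : ℝ × ℝ, (‖f x‖₊ : ℝ≥0∞) :=
          lintegral_mono fun θ => key θ
      _ = (∫⁻ x : ℝ × ℝ, (‖f x‖₊ : ℝ≥0∞)) * volume (Set.Icc (0 : ℝ) Real.pi) :=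
          setLIntegral_const _ _
      _ = ENNReal.ofReal Real.pi * ∫⁻ x : ℝ × ℝ, (‖f x‖₊ : ℝ≥0∞) := by
          rw [Real.volume_Icc, sub_zero, mul_comm]
end

section
/- The normal operator of the Radon transform is convolution with 2/|x|: for every continuous compactly supported f : ℝ² → ℂ and every x ∈ ℝ², R^*(Rf)(x) = ∫_{ℝ²} (2 / ‖x − y‖) f(y) dy, where R^*(Rf)(x) = ∫_0^{2π} Rf(θ, x·ω(θ)) dθ. -/
open MeasureTheory
open scoped ENNReal

/-- The integral of `f` along the ray from `x` in direction `(cos θ, sin θ)`. -/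
noncomputable def Fray (f : ℝ × ℝ → ℂ) (x : ℝ × ℝ) (θ : ℝ) : ℂ :=
  ∫ r in Set.Ioi (0 : ℝ), f (x.1 + r * Real.cos θ, x.2 + r * Real.sin θ)

lemma Fray_periodic (f : ℝ × ℝ → ℂ) (x : ℝ × ℝ) :
    Function.Periodic (Fray f x) (2 * Real.pi) := by
  intro θ
  unfold Fray
  simp [Real.cos_add_two_pi, Real.sin_add_two_pi]

lemma line_integrable (f : ℝ × ℝ → ℂ) (hf : Continuous f) (hsupp : HasCompactSupport f)
    (x v : ℝ × ℝ) (hv : v ≠ 0) :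
    Integrable (fun s : ℝ => f (x.1 + s * v.1, x.2 + s * v.2)) := by
  have key : ∀ s : ℝ, x + s • v = (x.1 + s * v.1, x.2 + s * v.2) := by
    intro s; ext <;> simp
  have hL : Topology.IsClosedEmbedding (fun s : ℝ => x + s • v) := by
    have h1 : Topology.IsClosedEmbedding (LinearMap.toSpanSingleton ℝ (ℝ × ℝ) v) :=
      LinearMap.isClosedEmbedding_of_injective (LinearMap.ker_toSpanSingleton (R := ℝ) (M := ℝ × ℝ) hv)
    exact (Homeomorph.addLeft x).isClosedEmbedding.comp h1
  have h2 : HasCompactSupport (fun s : ℝ => f (x + s • v)) :=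
    hsupp.comp_isClosedEmbedding hL
  have h3 : Continuous fun s : ℝ => f (x + s • v) := hf.comp (by fun_prop)
  have h4 := h3.integrable_of_hasCompactSupport (μ := volume) h2
  simpa only [key] using h4

set_option maxHeartbeats 1000000 in
lemma ray_vanish (f : ℝ × ℝ → ℂ) (hsupp : HasCompactSupport f) (x : ℝ × ℝ) :
    ∃ R : ℝ, 0 < R ∧ ∀ r c s : ℝ, c ^ 2 + s ^ 2 = 1 → R < r →
      f (x.1 + r * c, x.2 + r * s) = 0 := by
  obtain ⟨M, hM⟩ := hsupp.isBounded.subset_closedBall 0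
  refine ⟨2 * (|M| + |x.1| + |x.2|) + 1, by positivity, fun r c s hcs hr => ?_⟩
  apply image_eq_zero_of_notMem_tsupport
  intro hmem
  have hball := hM hmem
  rw [Metric.mem_closedBall, Prod.dist_eq] at hball
  have h1 : |x.1 + r * c - 0| ≤ M := le_trans (le_max_left _ _) hball
  have h2 : |x.2 + r * s - 0| ≤ M := le_trans (le_max_right _ _) hball
  rw [sub_zero] at h1 h2
  have h3 : |r * c| ≤ M + |x.1| := by
    have : r * c = (x.1 + r * c) - x.1 := by ring
    rw [this]
    calc |(x.1 + r * c) - x.1| ≤ |x.1 + r * c| + |x.1| := abs_sub _ _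
      _ ≤ M + |x.1| := by linarith
  have h4 : |r * s| ≤ M + |x.2| := by
    have : r * s = (x.2 + r * s) - x.2 := by ring
    rw [this]
    calc |(x.2 + r * s) - x.2| ≤ |x.2 + r * s| + |x.2| := abs_sub _ _
      _ ≤ M + |x.2| := by linarith
  have h5 : (r * c) ^ 2 ≤ (M + |x.1|) ^ 2 := by
    have := abs_le.mp h3
    nlinarith [this.1, this.2]
  have h6 : (r * s) ^ 2 ≤ (M + |x.2|) ^ 2 := by
    have := abs_le.mp h4
    nlinarith [this.1, this.2]
  have h7 : r ^ 2 = (r * c) ^ 2 + (r * s) ^ 2 := by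
    linear_combination r ^ 2 * hcs.symm
  have hMa : M ≤ |M| := le_abs_self M
  have hx1 : (0:ℝ) ≤ |x.1| := abs_nonneg _
  have hx2 : (0:ℝ) ≤ |x.2| := abs_nonneg _
  have hMn : (0:ℝ) ≤ |M| := abs_nonneg _
  have h8 : (2 * (|M| + |x.1| + |x.2|) + 1) ^ 2 < r ^ 2 := by
    have h0 : (0:ℝ) ≤ 2 * (|M| + |x.1| + |x.2|) + 1 := by positivity
    nlinarith [hr, h0]
  have h9 : (M + |x.1|) ^ 2 ≤ (|M| + |x.1|) ^ 2 := by
    nlinarith [mul_nonneg hx1 (sub_nonneg.mpr hMa), sq_abs M]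
  have h10 : (M + |x.2|) ^ 2 ≤ (|M| + |x.2|) ^ 2 := by
    nlinarith [mul_nonneg hx2 (sub_nonneg.mpr hMa), sq_abs M]
  nlinarith [h5, h6, h7, h8, h9, h10, mul_nonneg hx1 hx2, mul_nonneg hMn hx1,
    mul_nonneg hMn hx2, sq_nonneg (|M| + |x.1| + |x.2|)]

lemma prod_integrable (f : ℝ × ℝ → ℂ) (hf : Continuous f) (hsupp : HasCompactSupport f)
    (x : ℝ × ℝ) (a b : ℝ) :
    IntegrableOn (fun p : ℝ × ℝ => f (x.1 + p.1 * Real.cos p.2, x.2 + p.1 * Real.sin p.2))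
      (Set.Ioi 0 ×ˢ Set.Icc a b) := by
  obtain ⟨R, hR0, hR⟩ := ray_vanish f hsupp x
  have hG : Continuous fun p : ℝ × ℝ =>
      f (x.1 + p.1 * Real.cos p.2, x.2 + p.1 * Real.sin p.2) := by fun_prop
  have h1 : IntegrableOn (fun p : ℝ × ℝ =>
      f (x.1 + p.1 * Real.cos p.2, x.2 + p.1 * Real.sin p.2))
      (Set.Ioc 0 R ×ˢ Set.Icc a b) := by
    refine (hG.continuousOn.integrableOn_compact ((isCompact_Icc (a := (0:ℝ)) (b := R)).prod (isCompact_Icc (a := a) (b := b)))).mono_set ?_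
    exact Set.prod_mono Set.Ioc_subset_Icc_self subset_rfl
  have h2 : IntegrableOn (fun p : ℝ × ℝ =>
      f (x.1 + p.1 * Real.cos p.2, x.2 + p.1 * Real.sin p.2))
      (Set.Ioi R ×ˢ Set.Icc a b) := by
    refine integrableOn_zero.congr_fun ?_ (measurableSet_Ioi.prod measurableSet_Icc)
    rintro ⟨r, θ⟩ ⟨hr, -⟩
    exact (hR r _ _ (Real.cos_sq_add_sin_sq θ) hr).symm
  refine (h1.union h2).mono_set ?_
  rintro ⟨r, θ⟩ ⟨hr, hθ⟩
  rcases le_or_gt r R with h | h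
  · exact Or.inl ⟨⟨hr, h⟩, hθ⟩
  · exact Or.inr ⟨h, hθ⟩

lemma Fray_integrableOn (f : ℝ × ℝ → ℂ) (hf : Continuous f) (hsupp : HasCompactSupport f)
    (x : ℝ × ℝ) (a b : ℝ) : IntegrableOn (Fray f x) (Set.Icc a b) := by
  have h := prod_integrable f hf hsupp x a b
  rw [IntegrableOn, Measure.volume_eq_prod, ← Measure.prod_restrict] at h
  exact h.integral_prod_right

lemma Fray_intervalIntegrable (f : ℝ × ℝ → ℂ) (hf : Continuous f)
    (hsupp : HasCompactSupport f) (x : ℝ × ℝ) (a b : ℝ) :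
    IntervalIntegrable (Fray f x) volume a b :=
  (Fray_integrableOn f hf hsupp x (min a b) (max a b)).intervalIntegrable

lemma inner_eq (f : ℝ × ℝ → ℂ) (hf : Continuous f) (hsupp : HasCompactSupport f)
    (x : ℝ × ℝ) (θ : ℝ) :
    (∫ s : ℝ, f ((x.1 * Real.cos θ + x.2 * Real.sin θ) * Real.cos θ - s * Real.sin θ,
        (x.1 * Real.cos θ + x.2 * Real.sin θ) * Real.sin θ + s * Real.cos θ))
      = Fray f x (θ + Real.pi / 2) + Fray f x (θ - Real.pi / 2) := by
  have hpyth := Real.sin_sq_add_cos_sq θ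
  have hv : ((-Real.sin θ, Real.cos θ) : ℝ × ℝ) ≠ 0 := by
    intro h
    rw [Prod.ext_iff] at h
    obtain ⟨h1, h2⟩ := h
    simp only [Prod.fst_zero, Prod.snd_zero, neg_eq_zero] at h1 h2
    rw [h1, h2] at hpyth
    norm_num at hpyth
  have hInt : Integrable fun s : ℝ => f (x.1 - s * Real.sin θ, x.2 + s * Real.cos θ) := by
    have := line_integrable f hf hsupp x (-Real.sin θ, Real.cos θ) hv
    simpa only [mul_neg, ← sub_eq_add_neg] using this
  have e1 : (∫ s : ℝ, f ((x.1 * Real.cos θ + x.2 * Real.sin θ) * Real.cos θ - s * Real.sin θ,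
        (x.1 * Real.cos θ + x.2 * Real.sin θ) * Real.sin θ + s * Real.cos θ))
      = ∫ s : ℝ, f (x.1 - s * Real.sin θ, x.2 + s * Real.cos θ) := by
    calc (∫ s : ℝ, f ((x.1 * Real.cos θ + x.2 * Real.sin θ) * Real.cos θ - s * Real.sin θ,
            (x.1 * Real.cos θ + x.2 * Real.sin θ) * Real.sin θ + s * Real.cos θ))
        = ∫ s : ℝ, f (x.1 - (s + -(-x.1 * Real.sin θ + x.2 * Real.cos θ)) * Real.sin θ,
            x.2 + (s + -(-x.1 * Real.sin θ + x.2 * Real.cos θ)) * Real.cos θ) := by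
          congr 1
          funext s
          congr 1
          rw [Prod.mk.injEq]
          exact ⟨by linear_combination x.1 * hpyth, by linear_combination x.2 * hpyth⟩
      _ = ∫ s : ℝ, f (x.1 - s * Real.sin θ, x.2 + s * Real.cos θ) :=
          integral_add_right_eq_self
            (fun s : ℝ => f (x.1 - s * Real.sin θ, x.2 + s * Real.cos θ)) _
  have e2 : (∫ s in Set.Ioi (0:ℝ), f (x.1 - s * Real.sin θ, x.2 + s * Real.cos θ))
      = Fray f x (θ + Real.pi / 2) := by
    unfold Fray
    refine setIntegral_congr_fun measurableSet_Ioi fun s _ => ?_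
    have hc : Real.cos (θ + Real.pi / 2) = -Real.sin θ := by
      rw [Real.cos_add]; simp
    have hs : Real.sin (θ + Real.pi / 2) = Real.cos θ := by
      rw [Real.sin_add]; simp
    rw [hc, hs]
    congr 1
    rw [Prod.mk.injEq]
    exact ⟨by ring, rfl⟩
  have e3 : (∫ s in Set.Iic (0:ℝ), f (x.1 - s * Real.sin θ, x.2 + s * Real.cos θ))
      = Fray f x (θ - Real.pi / 2) := by
    have hneg := integral_comp_neg_Ioi (0:ℝ)
      (fun s => f (x.1 - s * Real.sin θ, x.2 + s * Real.cos θ))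
    rw [neg_zero] at hneg
    rw [← hneg]
    unfold Fray
    refine setIntegral_congr_fun measurableSet_Ioi fun s _ => ?_
    have hc : Real.cos (θ - Real.pi / 2) = Real.sin θ := by
      rw [Real.cos_sub]; simp
    have hs : Real.sin (θ - Real.pi / 2) = -Real.cos θ := by
      rw [Real.sin_sub]; simp
    rw [hc, hs]
    congr 1
    rw [Prod.mk.injEq]
    exact ⟨by ring, by ring⟩
  rw [e1, ← intervalIntegral.integral_Iic_add_Ioi hInt.integrableOn hInt.integrableOn, e2, e3]
  ring

/-- **The normal operator `R*R` of the Radon transform is convolution with `2/|x|`.**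
For every continuous compactly supported `f : ℝ² → ℂ` and every `x ∈ ℝ²`,
`R*(Rf)(x) = ∫_{ℝ²} (2/‖x-y‖) f(y) dy`, where
`R*(Rf)(x) = ∫₀^{2π} Rf(θ, x·ω(θ)) dθ`,
`Rf(θ,p) = ∫ f(p ω(θ) + s ω(θ)^⊥) ds`, `ω(θ) = (cos θ, sin θ)`,
`ω(θ)^⊥ = (-sin θ, cos θ)`, and `‖·‖` is the Euclidean norm. -/
theorem radon_normal_operator (f : ℝ × ℝ → ℂ) (hf : Continuous f)
    (hsupp : HasCompactSupport f) (x : ℝ × ℝ) :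
    (∫ θ in Set.Icc (0 : ℝ) (2 * Real.pi), ∫ s : ℝ,
        f ((x.1 * Real.cos θ + x.2 * Real.sin θ) * Real.cos θ - s * Real.sin θ,
           (x.1 * Real.cos θ + x.2 * Real.sin θ) * Real.sin θ + s * Real.cos θ))
      = ∫ y : ℝ × ℝ,
          ((2 / Real.sqrt ((x.1 - y.1) ^ 2 + (x.2 - y.2) ^ 2) : ℝ) : ℂ) * f y := by
  have pi_pos := Real.pi_pos
  have hper := Fray_periodic f x
  have hii : ∀ a b : ℝ, IntervalIntegrable (Fray f x) volume a b :=
    Fray_intervalIntegrable f hf hsupp x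
  have shift : ∀ c : ℝ, (∫ θ in (0:ℝ)..(2 * Real.pi), Fray f x (θ + c))
      = ∫ θ in (0:ℝ)..(2 * Real.pi), Fray f x θ := by
    intro c
    rw [intervalIntegral.integral_comp_add_right, zero_add]
    have h := hper.intervalIntegral_add_eq c 0
    rw [zero_add] at h
    rw [show 2 * Real.pi + c = c + 2 * Real.pi by ring, h]
  have hL : (∫ θ in Set.Icc (0 : ℝ) (2 * Real.pi), ∫ s : ℝ,
        f ((x.1 * Real.cos θ + x.2 * Real.sin θ) * Real.cos θ - s * Real.sin θ,
           (x.1 * Real.cos θ + x.2 * Real.sin θ) * Real.sin θ + s * Real.cos θ))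
      = (∫ θ in (0:ℝ)..(2 * Real.pi), Fray f x θ)
        + ∫ θ in (0:ℝ)..(2 * Real.pi), Fray f x θ := by
    have hA : IntervalIntegrable (fun θ => Fray f x (θ + Real.pi / 2)) volume 0 (2 * Real.pi) := by
      have := (hii (0 + Real.pi / 2) (2 * Real.pi + Real.pi / 2)).comp_add_right (Real.pi / 2)
      simpa using this
    have hB : IntervalIntegrable (fun θ => Fray f x (θ - Real.pi / 2)) volume 0 (2 * Real.pi) := by
      have := (hii (0 - Real.pi / 2) (2 * Real.pi - Real.pi / 2)).comp_sub_right (Real.pi / 2)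
      simpa using this
    calc (∫ θ in Set.Icc (0 : ℝ) (2 * Real.pi), ∫ s : ℝ,
        f ((x.1 * Real.cos θ + x.2 * Real.sin θ) * Real.cos θ - s * Real.sin θ,
           (x.1 * Real.cos θ + x.2 * Real.sin θ) * Real.sin θ + s * Real.cos θ))
        = ∫ θ in Set.Icc (0 : ℝ) (2 * Real.pi),
            (Fray f x (θ + Real.pi / 2) + Fray f x (θ - Real.pi / 2)) :=
          setIntegral_congr_fun measurableSet_Icc fun θ _ => inner_eq f hf hsupp x θ
      _ = ∫ θ in (0:ℝ)..(2 * Real.pi),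
            (Fray f x (θ + Real.pi / 2) + Fray f x (θ - Real.pi / 2)) := by
          rw [intervalIntegral.integral_of_le (by positivity), integral_Icc_eq_integral_Ioc]
      _ = (∫ θ in (0:ℝ)..(2 * Real.pi), Fray f x (θ + Real.pi / 2))
            + ∫ θ in (0:ℝ)..(2 * Real.pi), Fray f x (θ - Real.pi / 2) :=
          intervalIntegral.integral_add hA hB
      _ = (∫ θ in (0:ℝ)..(2 * Real.pi), Fray f x θ)
            + ∫ θ in (0:ℝ)..(2 * Real.pi), Fray f x θ := by
          rw [shift (Real.pi / 2)]
          congr 1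
          rw [show (fun θ => Fray f x (θ - Real.pi / 2))
            = fun θ => Fray f x (θ + -(Real.pi / 2)) by funext θ; rw [sub_eq_add_neg]]
          exact shift (-(Real.pi / 2))
  have hR : (∫ y : ℝ × ℝ,
        ((2 / Real.sqrt ((x.1 - y.1) ^ 2 + (x.2 - y.2) ^ 2) : ℝ) : ℂ) * f y)
      = 2 * ∫ θ in (0:ℝ)..(2 * Real.pi), Fray f x θ := by
    set g : ℝ × ℝ → ℂ :=
      fun y => ((2 / Real.sqrt ((x.1 - y.1) ^ 2 + (x.2 - y.2) ^ 2) : ℝ) : ℂ) * f y with hg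
    set h : ℝ × ℝ → ℂ :=
      fun y => ((2 / Real.sqrt (y.1 ^ 2 + y.2 ^ 2) : ℝ) : ℂ) * f (x + y) with hh
    have hGI : IntegrableOn
        (fun p : ℝ × ℝ => f (x.1 + p.1 * Real.cos p.2, x.2 + p.1 * Real.sin p.2))
        (Set.Ioi 0 ×ˢ Set.Ioo (-Real.pi) Real.pi) :=
      (prod_integrable f hf hsupp x (-Real.pi) Real.pi).mono_set
        (Set.prod_mono subset_rfl Set.Ioo_subset_Icc_self)
    have hGI2 : Integrable
        (fun p : ℝ × ℝ => (2:ℂ) * f (x.1 + p.1 * Real.cos p.2, x.2 + p.1 * Real.sin p.2))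
        ((volume.restrict (Set.Ioi (0:ℝ))).prod
          (volume.restrict (Set.Ioo (-Real.pi) Real.pi))) := by
      rw [Measure.prod_restrict, ← Measure.volume_eq_prod]
      exact hGI.const_mul 2
    have hprod : IntegrableOn
        (fun p : ℝ × ℝ => (2:ℂ) * f (x.1 + p.1 * Real.cos p.2, x.2 + p.1 * Real.sin p.2))
        (Set.Ioi 0 ×ˢ Set.Ioo (-Real.pi) Real.pi) (volume.prod volume) := by
      rw [IntegrableOn, ← Measure.prod_restrict]
      exact hGI2
    have t3 : ∀ p ∈ Set.Ioi (0:ℝ) ×ˢ Set.Ioo (-Real.pi) Real.pi,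
        p.1 • h (polarCoord.symm p)
        = (2:ℂ) * f (x.1 + p.1 * Real.cos p.2, x.2 + p.1 * Real.sin p.2) := by
      rintro ⟨r, θ⟩ ⟨hr, -⟩
      have hr' : (0:ℝ) < r := hr
      simp only [hh, polarCoord_symm_apply]
      have hsq : Real.sqrt ((r * Real.cos θ) ^ 2 + (r * Real.sin θ) ^ 2) = r := by
        rw [show (r * Real.cos θ) ^ 2 + (r * Real.sin θ) ^ 2 = r ^ 2 by
          linear_combination r ^ 2 * Real.sin_sq_add_cos_sq θ]
        exact Real.sqrt_sq hr'.le
      have hxadd : x + ((r * Real.cos θ, r * Real.sin θ) : ℝ × ℝ)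
          = (x.1 + r * Real.cos θ, x.2 + r * Real.sin θ) := by ext <;> simp
      rw [hsq, hxadd, Complex.real_smul]
      have hrne : (r:ℂ) ≠ 0 := Complex.ofReal_ne_zero.mpr hr'.ne'
      push_cast
      rw [← mul_assoc]
      congr 1
      field_simp
    calc (∫ y : ℝ × ℝ, g y)
        = ∫ y : ℝ × ℝ, g (x + y) := (integral_add_left_eq_self g x).symm
      _ = ∫ y : ℝ × ℝ, h y := by
          congr 1
          funext y
          simp only [hg, hh]
          have : (x.1 - (x + y).1) ^ 2 + (x.2 - (x + y).2) ^ 2 = y.1 ^ 2 + y.2 ^ 2 := by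
            simp only [Prod.fst_add, Prod.snd_add]
            ring
          rw [this]
      _ = ∫ p in polarCoord.target, p.1 • h (polarCoord.symm p) :=
          (integral_comp_polarCoord_symm h).symm
      _ = ∫ p in Set.Ioi (0:ℝ) ×ˢ Set.Ioo (-Real.pi) Real.pi,
            (2:ℂ) * f (x.1 + p.1 * Real.cos p.2, x.2 + p.1 * Real.sin p.2) := by
          rw [polarCoord_target]
          exact setIntegral_congr_fun (measurableSet_Ioi.prod measurableSet_Ioo) t3
      _ = ∫ r in Set.Ioi (0:ℝ), ∫ θ in Set.Ioo (-Real.pi) Real.pi,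
            (2:ℂ) * f (x.1 + r * Real.cos θ, x.2 + r * Real.sin θ) := by
          rw [Measure.volume_eq_prod]
          exact setIntegral_prod _ hprod
      _ = ∫ θ in Set.Ioo (-Real.pi) Real.pi, ∫ r in Set.Ioi (0:ℝ),
            (2:ℂ) * f (x.1 + r * Real.cos θ, x.2 + r * Real.sin θ) :=
          integral_integral_swap hGI2
      _ = ∫ θ in Set.Ioo (-Real.pi) Real.pi, (2:ℂ) * Fray f x θ := by
          refine setIntegral_congr_fun measurableSet_Ioo fun θ _ => ?_
          unfold Fray
          exact integral_const_mul 2 _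
      _ = (2:ℂ) * ∫ θ in Set.Ioo (-Real.pi) Real.pi, Fray f x θ := integral_const_mul 2 _
      _ = (2:ℂ) * ∫ θ in (-Real.pi)..Real.pi, Fray f x θ := by
          rw [intervalIntegral.integral_of_le (by linarith), integral_Ioc_eq_integral_Ioo]
      _ = 2 * ∫ θ in (0:ℝ)..(2 * Real.pi), Fray f x θ := by
          have h2 := hper.intervalIntegral_add_eq (-Real.pi) 0
          rw [zero_add, show -Real.pi + 2 * Real.pi = Real.pi by ring] at h2
          rw [h2]
  rw [hL, hR]
  ring
end

section
/- Filtered backprojection intertwining: let f ∈ L¹(ℝ²) and let k : [0, 2π] × ℝ → ℂ be bounded and measurable. Define the partial convolution (k ⊛ Rf)(θ, p) := ∫_ℝ k(θ, p − q) Rf(θ, q) dq. Then for every x ∈ ℝ², R^*(k ⊛ Rf)(x) = ∫_{ℝ²} K(x − y) f(y) dy, where K(z) := ∫_0^{2π} k(θ, z·ω(θ)) dθ = R^*k(z); that is, the filtered backprojection of Rf equals the two-dimensional convolution f ∗ R^*k. -/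
open MeasureTheory
open scoped ENNReal

noncomputable def rotL (θ : ℝ) : (ℝ × ℝ) →ₗ[ℝ] (ℝ × ℝ) where
  toFun p := (p.1 * Real.cos θ - p.2 * Real.sin θ, p.1 * Real.sin θ + p.2 * Real.cos θ)
  map_add' p q := by ext <;> simp <;> ring
  map_smul' c p := by ext <;> simp <;> ring

@[simp] lemma rotL_apply (θ : ℝ) (p : ℝ × ℝ) :
    rotL θ p = (p.1 * Real.cos θ - p.2 * Real.sin θ, p.1 * Real.sin θ + p.2 * Real.cos θ) := rfl

lemma rotL_det (θ : ℝ) : LinearMap.det (rotL θ) = 1 := by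
  rw [← LinearMap.det_toMatrix (Module.Basis.finTwoProd ℝ), Matrix.det_fin_two]
  simp only [LinearMap.toMatrix_apply, Module.Basis.finTwoProd_zero, Module.Basis.finTwoProd_one,
    Module.Basis.coe_finTwoProd_repr, rotL_apply]
  simp
  nlinarith [Real.sin_sq_add_cos_sq θ]

lemma rotL_mp (θ : ℝ) : MeasurePreserving (rotL θ) volume volume := by
  have hd : LinearMap.det (rotL θ) ≠ 0 := by rw [rotL_det]; norm_num
  refine ⟨(rotL θ).continuous_of_finiteDimensional.measurable, ?_⟩
  rw [Measure.map_linearMap_addHaar_eq_smul_addHaar volume hd, rotL_det]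
  simp

/-- **Filtered backprojection intertwining.**  For `f ∈ L¹(ℝ²)` and bounded measurable
`k : [0,2π] × ℝ → ℂ`, with the partial convolution
`(k ⊛ Rf)(θ,p) = ∫ k(θ, p - q) Rf(θ,q) dq`, one has for every `x ∈ ℝ²`:
`R*(k ⊛ Rf)(x) = ∫ K(x - y) f(y) dy` where `K(z) = ∫₀^{2π} k(θ, z·ω(θ)) dθ = R*k(z)`;
here `Rf(θ,p) = ∫ f(p ω(θ) + s ω(θ)^⊥) ds`, `R*g(x) = ∫₀^{2π} g(θ, x·ω(θ)) dθ`,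
`ω(θ) = (cos θ, sin θ)`, `ω(θ)^⊥ = (-sin θ, cos θ)`. -/
theorem filtered_backprojection_intertwining
    (f : ℝ × ℝ → ℂ) (hf : Integrable f volume)
    (k : ℝ × ℝ → ℂ) (hkm : Measurable k) (M : ℝ) (hkb : ∀ q : ℝ × ℝ, ‖k q‖ ≤ M)
    (x : ℝ × ℝ) :
    (∫ θ in Set.Icc (0 : ℝ) (2 * Real.pi), ∫ q : ℝ,
        k (θ, (x.1 * Real.cos θ + x.2 * Real.sin θ) - q) *
          (∫ s : ℝ, f (q * Real.cos θ - s * Real.sin θ, q * Real.sin θ + s * Real.cos θ)))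
      = ∫ y : ℝ × ℝ,
          (∫ θ in Set.Icc (0 : ℝ) (2 * Real.pi),
            k (θ, (x.1 - y.1) * Real.cos θ + (x.2 - y.2) * Real.sin θ)) * f y := by
  have key : ∀ θ : ℝ,
      (∫ q : ℝ, k (θ, (x.1 * Real.cos θ + x.2 * Real.sin θ) - q) *
          (∫ s : ℝ, f (q * Real.cos θ - s * Real.sin θ, q * Real.sin θ + s * Real.cos θ)))
      = ∫ y : ℝ × ℝ, k (θ, (x.1 - y.1) * Real.cos θ + (x.2 - y.2) * Real.sin θ) * f y := by
    intro θ
    set c : ℝ := x.1 * Real.cos θ + x.2 * Real.sin θ with hc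
    set g : ℝ × ℝ → ℂ := fun y =>
      k (θ, c - (y.1 * Real.cos θ + y.2 * Real.sin θ)) * f y with hgdef
    have hmeas : Measurable fun y : ℝ × ℝ =>
        (θ, c - (y.1 * Real.cos θ + y.2 * Real.sin θ)) := by fun_prop
    have hgm : AEStronglyMeasurable g volume :=
      ((hkm.comp hmeas).aestronglyMeasurable).mul hf.aestronglyMeasurable
    have hgi : Integrable g volume :=
      hf.bdd_mul (c := M) (hkm.comp hmeas).aestronglyMeasurable (Filter.Eventually.of_forall fun y => hkb _)
    -- change of variables
    have hcv : ∫ y, g y = ∫ p : ℝ × ℝ, g (rotL θ p) := by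
      have h1 := integral_map (μ := volume) ((rotL_mp θ).measurable.aemeasurable) (f := g)
        (by rw [(rotL_mp θ).map_eq]; exact hgm)
      rw [(rotL_mp θ).map_eq] at h1
      exact h1
    have hrot : ∀ p : ℝ × ℝ, g (rotL θ p)
        = k (θ, c - p.1) * f (p.1 * Real.cos θ - p.2 * Real.sin θ,
            p.1 * Real.sin θ + p.2 * Real.cos θ) := by
      intro p
      have : (p.1 * Real.cos θ - p.2 * Real.sin θ) * Real.cos θ
          + (p.1 * Real.sin θ + p.2 * Real.cos θ) * Real.sin θ = p.1 := by
        linear_combination p.1 * (Real.sin_sq_add_cos_sq θ)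
      simp only [hgdef, rotL_apply, this]
    have hgci : Integrable (g ∘ rotL θ) volume := ((rotL_mp θ).integrable_comp hgm).mpr hgi
    have hprod : ∫ p : ℝ × ℝ, g (rotL θ p)
        = ∫ q : ℝ, ∫ s : ℝ, g (rotL θ (q, s)) := by
      rw [Measure.volume_eq_prod ℝ ℝ] at hgci ⊢
      exact integral_prod _ hgci
    have harg : ∀ y : ℝ × ℝ, c - (y.1 * Real.cos θ + y.2 * Real.sin θ)
        = (x.1 - y.1) * Real.cos θ + (x.2 - y.2) * Real.sin θ := by
      intro y; rw [hc]; ring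
    calc (∫ q : ℝ, k (θ, c - q) *
          (∫ s : ℝ, f (q * Real.cos θ - s * Real.sin θ, q * Real.sin θ + s * Real.cos θ)))
        = ∫ q : ℝ, ∫ s : ℝ, g (rotL θ (q, s)) := by
          refine integral_congr_ae (Filter.Eventually.of_forall fun q => ?_)
          simp only [hrot, integral_const_mul]
      _ = ∫ y, g y := by rw [hcv, hprod]
      _ = ∫ y : ℝ × ℝ, k (θ, (x.1 - y.1) * Real.cos θ + (x.2 - y.2) * Real.sin θ) * f y := by
          refine integral_congr_ae (Filter.Eventually.of_forall fun y => ?_)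
          simp only [hgdef, harg y]
  simp only [key]
  -- swap the order of integration
  set μ : Measure ℝ := volume.restrict (Set.Icc (0 : ℝ) (2 * Real.pi)) with hμ
  have hFi : Integrable (fun z : ℝ × (ℝ × ℝ) =>
      k (z.1, (x.1 - z.2.1) * Real.cos z.1 + (x.2 - z.2.2) * Real.sin z.1) * f z.2)
      (μ.prod volume) := by
    have hsnd : MeasurePreserving (Prod.snd : ℝ × (ℝ × ℝ) → ℝ × ℝ) (μ.prod volume)
        (μ Set.univ • volume) := ⟨measurable_snd, Measure.map_snd_prod⟩
    have hμfin : μ Set.univ ≠ ⊤ := by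
      rw [hμ, Measure.restrict_apply_univ]
      exact (isCompact_Icc.measure_lt_top).ne
    have hf2 : Integrable (fun z : ℝ × (ℝ × ℝ) => f z.2) (μ.prod volume) :=
      (hsnd.integrable_comp (hf.smul_measure hμfin).aestronglyMeasurable).mpr (hf.smul_measure hμfin)
    refine hf2.bdd_mul (c := M) ?_ (Filter.Eventually.of_forall fun z => hkb _)
    exact (hkm.comp (by fun_prop : Measurable fun z : ℝ × (ℝ × ℝ) =>
      (z.1, (x.1 - z.2.1) * Real.cos z.1 + (x.2 - z.2.2) * Real.sin z.1))).aestronglyMeasurable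
  have hswap := integral_integral_swap (f := fun (θ : ℝ) (y : ℝ × ℝ) =>
      k (θ, (x.1 - y.1) * Real.cos θ + (x.2 - y.2) * Real.sin θ) * f y)
      (μ := μ) (ν := volume) hFi
  rw [hswap]
  refine integral_congr_ae (Filter.Eventually.of_forall fun y => ?_)
  exact integral_mul_const _ _
end
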